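/- Let A = {(3,0),(2,0),(2,2),(0,1)} ⊂ ℤ². Then |tA| = 3t² − 6t + 11 for all t ≥ 3. -/

import Mathlib

open Pointwise

noncomputable def Sset (t : ℕ) : Finset (ℤ × ℤ) :=
  (Finset.Icc ((0 : ℤ), (0 : ℤ)) (3 * t, 2 * t)).filter fun p =>
    ∃ c ∈ Finset.Icc (0 : ℤ) (t : ℤ),
      2 * c ≤ p.2 ∧ 4 * c ≤ p.1 + 2 * p.2 - 2 * t ∧ p.1 + 3 * p.2 ≤ 3 * t + 5 * c

lemma mem_Sset {t : ℕ} {p : ℤ × ℤ} :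
    p ∈ Sset t ↔ ∃ c : ℤ, 0 ≤ c ∧ 2 * c ≤ p.2 ∧
      4 * c ≤ p.1 + 2 * p.2 - 2 * t ∧ p.1 + 3 * p.2 ≤ 3 * t + 5 * c := by
  obtain ⟨x, y⟩ := p
  simp only [Sset, Finset.mem_filter, Finset.mem_Icc, Prod.mk_le_mk]
  constructor
  · rintro ⟨-, c, ⟨hc0, -⟩, h1, h2, h3⟩
    exact ⟨c, hc0, h1, h2, h3⟩
  · rintro ⟨c, h0, h1, h2, h3⟩
    exact ⟨⟨⟨by omega, by omega⟩, by omega, by omega⟩, c, ⟨h0, by omega⟩, h1, h2, h3⟩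

lemma Sset_add (t : ℕ) :
    Sset t + ({(3,0), (2,0), (2,2), (0,1)} : Finset (ℤ × ℤ)) = Sset (t + 1) := by
  ext ⟨x, y⟩
  simp only [Finset.mem_add, mem_Sset, Finset.mem_insert, Finset.mem_singleton]
  constructor
  · rintro ⟨⟨a1, a2⟩, ⟨c, h0, h1, h2, h3⟩, ⟨b1, b2⟩, hb, heq⟩
    simp only [Prod.mk_add_mk, Prod.mk.injEq] at heq hb
    obtain ⟨e1, e2⟩ := heq
    rcases hb with ⟨f1, f2⟩ | ⟨f1, f2⟩ | ⟨f1, f2⟩ | ⟨f1, f2⟩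
    · exact ⟨c, by omega, by omega, by omega, by omega⟩
    · exact ⟨c, by omega, by omega, by omega, by omega⟩
    · exact ⟨c + 1, by omega, by omega, by omega, by omega⟩
    · exact ⟨c, by omega, by omega, by omega, by omega⟩
  · rintro ⟨c, h0, h1, h2, h3⟩
    by_cases ha : 1 ≤ x + 2*y - 2*(t+1) - 4*c
    · refine ⟨(x - 3, y), ⟨c, by omega, by omega, by omega, by omega⟩, (3, 0),
        Or.inl rfl, by simp [Prod.ext_iff]⟩
    · by_cases hbb : 1 ≤ 3*(t+1) + 5*c - x - 3*y
      · refine ⟨(x - 2, y), ⟨c, by omega, by omega, by omega, by omega⟩, (2, 0),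
          Or.inr (Or.inl rfl), by simp [Prod.ext_iff]⟩
      · by_cases hc : 1 ≤ c
        · refine ⟨(x - 2, y - 2), ⟨c - 1, by omega, by omega, by omega, by omega⟩, (2, 2),
            Or.inr (Or.inr (Or.inl rfl)), by simp [Prod.ext_iff]⟩
        · refine ⟨(x, y - 1), ⟨c, by omega, by omega, by omega, by omega⟩, (0, 1),
            Or.inr (Or.inr (Or.inr rfl)), by simp [Prod.ext_iff]⟩

lemma nsmul_eq_Sset (t : ℕ) :
    t • ({(3,0), (2,0), (2,2), (0,1)} : Finset (ℤ × ℤ)) = Sset t := by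
  induction t with
  | zero => decide
  | succ n ih => rw [succ_nsmul, ih, Sset_add]

-- pieces of the difference set at step T = t+1
noncomputable def R0 (T : ℕ) : Finset (ℤ × ℤ) :=
  (Finset.Icc (2 * T : ℤ) (3 * T)).map ⟨fun x => (x, 0), fun a b h => by simpa using h⟩

noncomputable def R1 (T : ℕ) : Finset (ℤ × ℤ) :=
  (Finset.Icc (2 * T - 2 : ℤ) (3 * T - 3)).map ⟨fun x => (x, 1), fun a b h => by simpa using h⟩

noncomputable def Strip (T j : ℕ) : Finset (ℤ × ℤ) :=
  (Finset.Icc (2 : ℤ) ((T : ℤ) - j)).map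
    ⟨fun y => (2 * T + j - 2 * y, y), fun a b h => by simpa using h⟩

noncomputable def Mv (t : ℕ) : Finset (ℤ × ℤ) :=
  (Sset t).map ⟨fun p => p + (2, 2), fun a b h => by simpa using h⟩

lemma mem_R0 {T : ℕ} {p : ℤ × ℤ} : p ∈ R0 T ↔ 2 * T ≤ p.1 ∧ p.1 ≤ 3 * T ∧ p.2 = 0 := by
  obtain ⟨x, y⟩ := p
  simp only [R0, Finset.mem_map, Finset.mem_Icc, Function.Embedding.coeFn_mk, Prod.mk.injEq, DFunLike.coe]
  constructor
  · rintro ⟨a, ⟨h1, h2⟩, rfl, rfl⟩; exact ⟨h1, h2, rfl⟩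
  · rintro ⟨h1, h2, rfl⟩; exact ⟨x, ⟨h1, h2⟩, rfl, rfl⟩

lemma mem_R1 {T : ℕ} {p : ℤ × ℤ} :
    p ∈ R1 T ↔ 2 * T - 2 ≤ p.1 ∧ p.1 ≤ 3 * T - 3 ∧ p.2 = 1 := by
  obtain ⟨x, y⟩ := p
  simp only [R1, Finset.mem_map, Finset.mem_Icc, Function.Embedding.coeFn_mk, Prod.mk.injEq, DFunLike.coe]
  constructor
  · rintro ⟨a, ⟨h1, h2⟩, rfl, rfl⟩; exact ⟨h1, h2, rfl⟩
  · rintro ⟨h1, h2, rfl⟩; exact ⟨x, ⟨h1, h2⟩, rfl, rfl⟩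

lemma mem_Strip {T j : ℕ} {p : ℤ × ℤ} :
    p ∈ Strip T j ↔ 2 ≤ p.2 ∧ p.2 ≤ (T : ℤ) - j ∧ p.1 = 2 * T + j - 2 * p.2 := by
  obtain ⟨x, y⟩ := p
  simp only [Strip, Finset.mem_map, Finset.mem_Icc, Function.Embedding.coeFn_mk, Prod.mk.injEq, DFunLike.coe]
  constructor
  · rintro ⟨a, ⟨h1, h2⟩, rfl, rfl⟩; exact ⟨h1, h2, rfl⟩
  · rintro ⟨h1, h2, rfl⟩; exact ⟨y, ⟨h1, h2⟩, rfl, rfl⟩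

lemma mem_Mv {t : ℕ} {p : ℤ × ℤ} : p ∈ Mv t ↔ (p.1 - 2, p.2 - 2) ∈ Sset t := by
  obtain ⟨x, y⟩ := p
  simp only [Mv, Finset.mem_map, Function.Embedding.coeFn_mk, DFunLike.coe]
  constructor
  · rintro ⟨⟨a1, a2⟩, h, heq⟩
    simp only [Prod.mk_add_mk, Prod.mk.injEq] at heq
    obtain ⟨rfl, rfl⟩ := heq
    simpa using h
  · intro h
    exact ⟨(x - 2, y - 2), h, by simp [Prod.ext_iff]⟩

lemma Sset_decomp (t : ℕ) (ht : 3 ≤ t) :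
    Sset (t + 1) =
      Mv t ∪ R0 (t+1) ∪ R1 (t+1) ∪ Strip (t+1) 0 ∪ Strip (t+1) 1 ∪
        Strip (t+1) 2 ∪ Strip (t+1) 3 := by
  ext ⟨x, y⟩
  simp only [Finset.mem_union, mem_Mv, mem_R0, mem_R1, mem_Strip, mem_Sset]
  constructor
  · rintro ⟨c, h0, h1, h2, h3⟩
    by_cases hy0 : y = 0
    · exact Or.inl (Or.inl (Or.inl (Or.inl (Or.inl (Or.inr ⟨by omega, by omega, hy0⟩)))))
    · by_cases hy1 : y = 1
      · exact Or.inl (Or.inl (Or.inl (Or.inl (Or.inr ⟨by omega, by omega, hy1⟩))))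
      · by_cases hs : x + 2*y ≤ 2*(t+1) + 3
        · -- strip cases, c must be 0
          have hc0 : c = 0 := by omega
          subst hc0
          by_cases j0 : x + 2*y = 2*(t+1)
          · exact Or.inl (Or.inl (Or.inl (Or.inr ⟨by omega, by omega, by push_cast; omega⟩)))
          · by_cases j1 : x + 2*y = 2*(t+1) + 1
            · exact Or.inl (Or.inl (Or.inr ⟨by omega, by push_cast; omega, by push_cast; omega⟩))
            · by_cases j2 : x + 2*y = 2*(t+1) + 2
              · exact Or.inl (Or.inr ⟨by omega, by push_cast; omega, by push_cast; omega⟩)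
              · exact Or.inr ⟨by omega, by push_cast; omega, by push_cast; omega⟩
        · refine Or.inl (Or.inl (Or.inl (Or.inl (Or.inl (Or.inl ?_)))))
          by_cases hc : 1 ≤ c
          · exact ⟨c - 1, by omega, by omega, by omega, by omega⟩
          · exact ⟨0, by omega, by omega, by omega, by omega⟩
  · rintro ((((((h | ⟨h1, h2, h3⟩) | ⟨h1, h2, h3⟩) | ⟨h1, h2, h3⟩) | ⟨h1, h2, h3⟩) |
      ⟨h1, h2, h3⟩) | ⟨h1, h2, h3⟩)
    · obtain ⟨c, h0, h1, h2, h3⟩ := h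
      exact ⟨c + 1, by omega, by omega, by omega, by omega⟩
    · exact ⟨0, by omega, by omega, by omega, by omega⟩
    · exact ⟨0, by omega, by omega, by omega, by omega⟩
    · exact ⟨0, by omega, by omega, by push_cast at h2 h3 ⊢; omega, by push_cast at h2 h3 ⊢; omega⟩
    · exact ⟨0, by omega, by omega, by push_cast at h2 h3 ⊢; omega, by push_cast at h2 h3 ⊢; omega⟩
    · exact ⟨0, by omega, by omega, by push_cast at h2 h3 ⊢; omega, by push_cast at h2 h3 ⊢; omega⟩
    · exact ⟨0, by omega, by omega, by push_cast at h2 h3 ⊢; omega, by push_cast at h2 h3 ⊢; omega⟩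

lemma card_Sset : ∀ t : ℕ, 3 ≤ t → ((Sset t).card : ℤ) = 3 * t ^ 2 - 6 * t + 11 := by
  intro t ht
  induction t with
  | zero => omega
  | succ n ih =>
    rcases Nat.lt_or_ge n 3 with hn | hn
    · have hn2 : n = 2 := by omega
      subst hn2
      have h20 : (Sset 3).card = 20 := by decide
      show ((Sset 3).card : ℤ) = _
      rw [h20]; norm_num
    · have key := Sset_decomp n hn
      have hd : ∀ p : ℤ × ℤ, p ∈ Mv n → 2 ≤ p.2 ∧ p.1 + 2 * p.2 ≥ 2 * (n+1) + 4 := by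
        intro p hp
        rw [mem_Mv, mem_Sset] at hp
        obtain ⟨c, h0, h1, h2, h3⟩ := hp
        constructor <;> · push_cast; omega
      -- disjointness chain
      have d1 : Disjoint (Mv n) (R0 (n+1)) := by
        rw [Finset.disjoint_left]
        intro p hp hq
        obtain ⟨hd1, hd2⟩ := hd p hp
        rw [mem_R0] at hq
        omega
      have d2 : Disjoint (Mv n ∪ R0 (n+1)) (R1 (n+1)) := by
        rw [Finset.disjoint_left]
        intro p hp hq
        rw [mem_R1] at hq
        rcases Finset.mem_union.mp hp with h | h
        · obtain ⟨hd1, hd2⟩ := hd p h; omega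
        · rw [mem_R0] at h; omega
      have hstrip : ∀ j : ℕ, j ≤ 3 →
          ∀ p : ℤ × ℤ, p ∈ Strip (n+1) j → 2 ≤ p.2 ∧ p.1 + 2*p.2 = 2*(n+1) + j := by
        intro j hj p hp
        rw [mem_Strip] at hp
        obtain ⟨h1, h2, h3⟩ := hp
        constructor
        · exact h1
        · push_cast at h3 ⊢; omega
      have d3 : Disjoint (Mv n ∪ R0 (n+1) ∪ R1 (n+1)) (Strip (n+1) 0) := by
        rw [Finset.disjoint_left]
        intro p hp hq
        obtain ⟨hq1, hq2⟩ := hstrip 0 (by norm_num) p hq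
        rcases Finset.mem_union.mp hp with h | h
        · rcases Finset.mem_union.mp h with h | h
          · obtain ⟨hd1, hd2⟩ := hd p h; omega
          · rw [mem_R0] at h; omega
        · rw [mem_R1] at h; omega
      have d4 : Disjoint (Mv n ∪ R0 (n+1) ∪ R1 (n+1) ∪ Strip (n+1) 0) (Strip (n+1) 1) := by
        rw [Finset.disjoint_left]
        intro p hp hq
        obtain ⟨hq1, hq2⟩ := hstrip 1 (by norm_num) p hq
        rcases Finset.mem_union.mp hp with h | h
        · rcases Finset.mem_union.mp h with h | h
          · rcases Finset.mem_union.mp h with h | h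
            · obtain ⟨hd1, hd2⟩ := hd p h; omega
            · rw [mem_R0] at h; omega
          · rw [mem_R1] at h; omega
        · obtain ⟨-, h2⟩ := hstrip 0 (by norm_num) p h; omega
      have d5 : Disjoint (Mv n ∪ R0 (n+1) ∪ R1 (n+1) ∪ Strip (n+1) 0 ∪ Strip (n+1) 1)
          (Strip (n+1) 2) := by
        rw [Finset.disjoint_left]
        intro p hp hq
        obtain ⟨hq1, hq2⟩ := hstrip 2 (by norm_num) p hq
        rcases Finset.mem_union.mp hp with h | h
        · rcases Finset.mem_union.mp h with h | h
          · rcases Finset.mem_union.mp h with h | h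
            · rcases Finset.mem_union.mp h with h | h
              · obtain ⟨hd1, hd2⟩ := hd p h; omega
              · rw [mem_R0] at h; omega
            · rw [mem_R1] at h; omega
          · obtain ⟨-, h2⟩ := hstrip 0 (by norm_num) p h; omega
        · obtain ⟨-, h2⟩ := hstrip 1 (by norm_num) p h; omega
      have d6 : Disjoint
          (Mv n ∪ R0 (n+1) ∪ R1 (n+1) ∪ Strip (n+1) 0 ∪ Strip (n+1) 1 ∪ Strip (n+1) 2)
          (Strip (n+1) 3) := by
        rw [Finset.disjoint_left]
        intro p hp hq
        obtain ⟨hq1, hq2⟩ := hstrip 3 (by norm_num) p hq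
        rcases Finset.mem_union.mp hp with h | h
        · rcases Finset.mem_union.mp h with h | h
          · rcases Finset.mem_union.mp h with h | h
            · rcases Finset.mem_union.mp h with h | h
              · rcases Finset.mem_union.mp h with h | h
                · obtain ⟨hd1, hd2⟩ := hd p h; omega
                · rw [mem_R0] at h; omega
              · rw [mem_R1] at h; omega
            · obtain ⟨-, h2⟩ := hstrip 0 (by norm_num) p h; omega
          · obtain ⟨-, h2⟩ := hstrip 1 (by norm_num) p h; omega
        · obtain ⟨-, h2⟩ := hstrip 2 (by norm_num) p h; omega
      have ihn := ih (by omega)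
      calc ((Sset (n+1)).card : ℤ)
          = ((Sset n).card : ℤ) + 6 * n - 3 := by
            rw [key, Finset.card_union_of_disjoint d6, Finset.card_union_of_disjoint d5,
              Finset.card_union_of_disjoint d4, Finset.card_union_of_disjoint d3,
              Finset.card_union_of_disjoint d2, Finset.card_union_of_disjoint d1]
            simp only [Mv, R0, R1, Strip, Finset.card_map, Int.card_Icc]
            omega
        _ = 3 * ((n:ℕ)+1 : ℤ) ^ 2 - 6 * ((n:ℕ)+1 : ℤ) + 11 := by
            rw [ihn]; ring
        _ = 3 * ((n+1 : ℕ) : ℤ) ^ 2 - 6 * ((n+1 : ℕ) : ℤ) + 11 := by push_cast; ring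

theorem stmt_18 (A : Finset (ℤ × ℤ))
    (hA : A = {(3,0), (2,0), (2,2), (0,1)}) :
    ∀ t : ℕ, 3 ≤ t → ((t • A).card : ℤ) = 3 * t ^ 2 - 6 * t + 11 := by
  subst hA
  intro t ht
  rw [nsmul_eq_Sset]
  exact card_Sset t ht
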